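/- Let (X_t) be a non-negative integrable random process adapted to a filtration (F_t), and let T be a stopping time with respect to (F_t). If there exists δ > 0 such that for all t, (X_t − E[X_{t+1} | F_t])·1{t < T} ≥ δ·1{t < T}, then E[T | F_0] ≤ (X_0 − E[X_T | F_0]) / δ. -/

import Mathlib

open MeasureTheory Filter Set Topology

private lemma aux_int_of_mono {Ω : Type*} {m0 : MeasurableSpace Ω} {μ : Measure Ω}
    {f : ℕ → Ω → ℝ} {F : Ω → ℝ} {C : ℝ}
    (hFm : AEStronglyMeasurable F μ)
    (hf : ∀ n, Integrable (f n) μ)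
    (h0 : ∀ n ω, 0 ≤ f n ω)
    (hmono : ∀ ω, Monotone fun n => f n ω)
    (htend : ∀ ω, Tendsto (fun n => f n ω) atTop (𝓝 (F ω)))
    (hC : ∀ n, ∫ ω, f n ω ∂μ ≤ C) : Integrable F μ := by
  have hF0 : ∀ ω, 0 ≤ F ω := fun ω =>
    ge_of_tendsto (htend ω) (Eventually.of_forall fun n => h0 n ω)
  refine ⟨hFm, ?_⟩
  rw [hasFiniteIntegral_iff_ofReal (ae_of_all _ hF0)]
  have hlim : Tendsto (fun n => ∫⁻ ω, ENNReal.ofReal (f n ω) ∂μ) atTop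
      (𝓝 (∫⁻ ω, ENNReal.ofReal (F ω) ∂μ)) :=
    lintegral_tendsto_of_tendsto_of_monotone
      (fun n => (hf n).aemeasurable.ennreal_ofReal)
      (ae_of_all _ fun ω n m hnm => ENNReal.ofReal_le_ofReal (hmono ω hnm))
      (ae_of_all _ fun ω => (ENNReal.continuous_ofReal.tendsto _).comp (htend ω))
  have hb : ∀ n, ∫⁻ ω, ENNReal.ofReal (f n ω) ∂μ ≤ ENNReal.ofReal C := fun n => by
    rw [← ofReal_integral_eq_lintegral_ofReal (hf n) (ae_of_all _ (h0 n))]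
    exact ENNReal.ofReal_le_ofReal (hC n)
  exact lt_of_le_of_lt (le_of_tendsto' hlim hb) ENNReal.ofReal_lt_top

private lemma aux_ind_eq {Ω : Type*} (X : ℕ → Ω → ℝ) (T : Ω → ℕ) (n : ℕ) :
    Set.indicator {ω' | T ω' ≤ n} (fun ω => X (T ω) ω) =
      fun ω => ∑ t ∈ Finset.range (n + 1), Set.indicator {ω' | T ω' = t} (X t) ω := by
  funext ω
  simp only [Set.indicator_apply, Set.mem_setOf_eq]
  rw [Finset.sum_ite_eq (Finset.range (n + 1)) (T ω) (fun t => X t ω)]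
  simp [Nat.lt_succ_iff]

private lemma drift_claim
    {Ω : Type*} {m0 : MeasurableSpace Ω} (μ : Measure Ω) [IsProbabilityMeasure μ]
    (ℱ : Filtration ℕ m0) (X : ℕ → Ω → ℝ) (T : Ω → ℕ)
    (hT : IsStoppingTime ℱ (fun ω => (T ω : WithTop ℕ)))
    (hint : ∀ t, Integrable (X t) μ)
    (hnonneg : ∀ t ω, 0 ≤ X t ω)
    (δ : ℝ)
    (hdrift : ∀ t : ℕ, ∀ᵐ ω ∂μ,
      δ * Set.indicator {ω' | t < T ω'} (fun _ => (1 : ℝ)) ω ≤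
        (X t ω - (μ[X (t + 1) | ℱ t]) ω) *
          Set.indicator {ω' | t < T ω'} (fun _ => (1 : ℝ)) ω)
    (s : Set Ω) (hs : MeasurableSet[ℱ 0] s) (n : ℕ) :
    δ * ∫ ω in s, ((min (T ω) n : ℕ) : ℝ) ∂μ
      + ∫ ω in {ω' | T ω' ≤ n} ∩ s, X (T ω) ω ∂μ
      + ∫ ω in {ω' | n < T ω'} ∩ s, X n ω ∂μ
    ≤ ∫ ω in s, X 0 ω ∂μ := by
  have hsm : MeasurableSet s := ℱ.le 0 _ hs
  have hgt : ∀ t, MeasurableSet {ω' | t < T ω'} := fun t => ℱ.le t _ (by simpa using hT.measurableSet_gt t)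
  have hle : ∀ t, MeasurableSet {ω' | T ω' ≤ t} := fun t => ℱ.le t _ (by simpa using hT.measurableSet_le t)
  have heq : ∀ t, MeasurableSet {ω' | T ω' = t} := fun t => ℱ.le t _ (by simpa using hT.measurableSet_eq t)
  have hTm : Measurable T := measurable_to_countable' fun t => by
    have h : T ⁻¹' {t} = {ω' | T ω' = t} := by ext ω; simp
    rw [h]; exact heq t
  have hmin_int : ∀ k : ℕ, Integrable (fun ω => ((min (T ω) k : ℕ) : ℝ)) μ := by
    intro k
    have hms : Measurable fun ω => ((min (T ω) k : ℕ) : ℝ) :=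
      (measurable_from_top (f := fun j : ℕ => ((min j k : ℕ) : ℝ))).comp hTm
    refine (integrable_const (k : ℝ)).mono' hms.aestronglyMeasurable (ae_of_all _ fun ω => ?_)
    rw [Real.norm_eq_abs, abs_of_nonneg (by positivity)]
    exact_mod_cast min_le_right (T ω) k
  have hVint : ∀ k : ℕ, IntegrableOn (fun ω => X (T ω) ω) {ω' | T ω' ≤ k} μ := by
    intro k
    rw [← integrable_indicator_iff (hle k), aux_ind_eq]
    exact integrable_finset_sum _ fun t _ => (hint t).indicator (heq t)
  induction n with
  | zero =>
    have h1 : ∫ ω in s, ((min (T ω) 0 : ℕ) : ℝ) ∂μ = 0 := by simp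
    have h2 : ∫ ω in {ω' | T ω' ≤ 0} ∩ s, X (T ω) ω ∂μ
        = ∫ ω in {ω' | T ω' ≤ 0} ∩ s, X 0 ω ∂μ := by
      refine setIntegral_congr_fun ((hle 0).inter hsm) fun ω hω => ?_
      have : T ω = 0 := Nat.le_zero.mp hω.1
      simp [this]
    have h3 : {ω' | (0:ℕ) < T ω'} = {ω' | T ω' ≤ 0}ᶜ := by
      ext ω; simp only [Set.mem_setOf_eq, Set.mem_compl_iff]; omega
    have h4 := integral_add_compl (μ := μ.restrict s) (hle 0) ((hint 0).restrict)
    rw [Measure.restrict_restrict (hle 0), Measure.restrict_restrict (hle 0).compl] at h4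
    rw [h1, h2, h3, mul_zero]
    linarith
  | succ n ih =>
    set A := {ω' | n < T ω'} with hA
    set A' := {ω' | n + 1 < T ω'} with hA'
    set B := {ω' | T ω' = n + 1} with hB
    set E := μ[X (n + 1) | ℱ n] with hE
    -- (1) min integral splits
    have hpt : ∀ ω, ((min (T ω) (n+1) : ℕ) : ℝ)
        = ((min (T ω) n : ℕ) : ℝ) + A.indicator (fun _ => (1:ℝ)) ω := by
      intro ω
      by_cases h : ω ∈ A
      · have hn : n < T ω := h
        rw [Set.indicator_of_mem h]
        rw [show min (T ω) (n+1) = min (T ω) n + 1 by omega]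
        push_cast; ring
      · have hn : ¬ n < T ω := h
        rw [Set.indicator_of_notMem h]
        rw [show min (T ω) (n+1) = min (T ω) n by omega]
        ring
    have hmin : ∫ ω in s, ((min (T ω) (n+1) : ℕ) : ℝ) ∂μ
        = ∫ ω in s, ((min (T ω) n : ℕ) : ℝ) ∂μ + (μ (A ∩ s)).toReal := by
      calc ∫ ω in s, ((min (T ω) (n+1) : ℕ) : ℝ) ∂μ
          = ∫ ω in s, (((min (T ω) n : ℕ) : ℝ) + A.indicator (fun _ => (1:ℝ)) ω) ∂μ := by
            exact integral_congr_ae (ae_of_all _ fun ω => hpt ω)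
        _ = ∫ ω in s, ((min (T ω) n : ℕ) : ℝ) ∂μ + ∫ ω in s, A.indicator (fun _ => (1:ℝ)) ω ∂μ :=
            integral_add ((hmin_int n).restrict) (((integrable_const (1:ℝ)).indicator (hgt n)).restrict)
        _ = ∫ ω in s, ((min (T ω) n : ℕ) : ℝ) ∂μ + (μ (A ∩ s)).toReal := by
            rw [integral_indicator_const (1:ℝ) (hgt n), measureReal_restrict_apply (hgt n)]
            simp; rfl
    -- (2) split the stopped-value integral
    have hsplit2 : ∫ ω in {ω' | T ω' ≤ n + 1} ∩ s, X (T ω) ω ∂μ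
        = ∫ ω in {ω' | T ω' ≤ n} ∩ s, X (T ω) ω ∂μ + ∫ ω in B ∩ s, X (T ω) ω ∂μ := by
      have hset : {ω' | T ω' ≤ n + 1} ∩ s = ({ω' | T ω' ≤ n} ∩ s) ∪ (B ∩ s) := by
        have h : {ω' | T ω' ≤ n + 1} = {ω' | T ω' ≤ n} ∪ B := by
          ext ω
          simp only [Set.mem_setOf_eq, Set.mem_union, hB]
          omega
        rw [h, Set.union_inter_distrib_right]
      have hdisj : Disjoint ({ω' | T ω' ≤ n} ∩ s) (B ∩ s) := by
        rw [Set.disjoint_left]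
        rintro ω ⟨h1, -⟩ ⟨h2, -⟩
        simp only [Set.mem_setOf_eq, hB] at h1 h2
        omega
      rw [hset]
      exact setIntegral_union hdisj ((heq (n+1)).inter hsm)
        ((hVint n).mono_set Set.inter_subset_left)
        (((hVint (n+1)).mono_set (by
          rintro ω ⟨h1, -⟩
          simp only [Set.mem_setOf_eq, hB] at h1 ⊢
          omega)))
    -- (3) key drift step
    have hsAn : MeasurableSet[ℱ n] (A ∩ s) :=
      (show MeasurableSet[ℱ n] {ω' | n < T ω'} by simpa using hT.measurableSet_gt n).inter (ℱ.mono (Nat.zero_le n) _ hs)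
    have ha : ∫ ω in A ∩ s, δ * A.indicator (fun _ => (1:ℝ)) ω ∂μ
        ≤ ∫ ω in A ∩ s, (X n ω - E ω) * A.indicator (fun _ => (1:ℝ)) ω ∂μ := by
      refine setIntegral_mono_ae ?_ ?_ (hdrift n)
      · have h : (fun ω => δ * A.indicator (fun _ => (1:ℝ)) ω)
            = A.indicator (fun _ => δ) := by
          funext ω; by_cases h : ω ∈ A <;> simp [h]
        rw [h]
        exact ((integrable_const δ).indicator (hgt n)).restrict
      · have h : (fun ω => (X n ω - E ω) * A.indicator (fun _ => (1:ℝ)) ω)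
            = A.indicator (fun ω => X n ω - E ω) := by
          funext ω; by_cases h : ω ∈ A <;> simp [h]
        rw [h]
        exact (((hint n).sub integrable_condExp).indicator (hgt n)).restrict
    have ha1 : ∫ ω in A ∩ s, δ * A.indicator (fun _ => (1:ℝ)) ω ∂μ
        = (μ (A ∩ s)).toReal * δ := by
      rw [setIntegral_congr_fun ((hgt n).inter hsm)
        (g := fun _ => δ) (fun ω hω => by rw [hA, Set.indicator_of_mem hω.1, mul_one])]
      rw [setIntegral_const, smul_eq_mul, measureReal_def]
    have ha2 : ∫ ω in A ∩ s, (X n ω - E ω) * A.indicator (fun _ => (1:ℝ)) ω ∂μ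
        = ∫ ω in A ∩ s, (X n ω - E ω) ∂μ := by
      refine setIntegral_congr_fun ((hgt n).inter hsm) fun ω hω => ?_
      simp [Set.indicator_of_mem hω.1]
    have he : ∫ ω in A ∩ s, (X n ω - E ω) ∂μ
        = ∫ ω in A ∩ s, X n ω ∂μ - ∫ ω in A ∩ s, E ω ∂μ :=
      integral_sub ((hint n).restrict) (integrable_condExp.restrict)
    have hb' : ∫ ω in A ∩ s, E ω ∂μ = ∫ ω in A ∩ s, X (n+1) ω ∂μ :=
      setIntegral_condExp (ℱ.le n) (hint (n+1)) hsAn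
    have hc : ∫ ω in A ∩ s, X (n+1) ω ∂μ
        = ∫ ω in B ∩ s, X (n+1) ω ∂μ + ∫ ω in A' ∩ s, X (n+1) ω ∂μ := by
      have hset : A ∩ s = (B ∩ s) ∪ (A' ∩ s) := by
        have h : A = B ∪ A' := by
          ext ω
          simp only [Set.mem_setOf_eq, Set.mem_union, hA, hA', hB]
          omega
        rw [h, Set.union_inter_distrib_right]
      have hdisj : Disjoint (B ∩ s) (A' ∩ s) := by
        rw [Set.disjoint_left]
        rintro ω ⟨h1, -⟩ ⟨h2, -⟩
        simp only [Set.mem_setOf_eq, hA', hB] at h1 h2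
        omega
      rw [hset]
      exact setIntegral_union hdisj ((hgt (n+1)).inter hsm)
        ((hint (n+1)).restrict) ((hint (n+1)).restrict)
    have hd : ∫ ω in B ∩ s, X (n+1) ω ∂μ = ∫ ω in B ∩ s, X (T ω) ω ∂μ := by
      refine setIntegral_congr_fun ((heq (n+1)).inter hsm) fun ω hω => ?_
      have : T ω = n + 1 := hω.1
      simp [this]
    rw [hmin, hsplit2]
    rw [ha1, ha2, he, hb', hc, hd] at ha
    linarith

/-- Additive drift theorem (upper bound). -/
theorem additive_drift_upper
    {Ω : Type*} {m0 : MeasurableSpace Ω} (μ : Measure Ω) [IsProbabilityMeasure μ]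
    (ℱ : Filtration ℕ m0) (X : ℕ → Ω → ℝ) (T : Ω → ℕ)
    (hT : IsStoppingTime ℱ (fun ω => (T ω : WithTop ℕ)))
    (hadapt : Adapted ℱ X)
    (hint : ∀ t, Integrable (X t) μ)
    (hnonneg : ∀ t ω, 0 ≤ X t ω)
    (δ : ℝ) (hδ : 0 < δ)
    (hdrift : ∀ t : ℕ, ∀ᵐ ω ∂μ,
      δ * Set.indicator {ω' | t < T ω'} (fun _ => (1 : ℝ)) ω ≤
        (X t ω - (μ[X (t + 1) | ℱ t]) ω) *
          Set.indicator {ω' | t < T ω'} (fun _ => (1 : ℝ)) ω) :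
    (μ[fun ω => (T ω : ℝ) | ℱ 0]) ≤ᵐ[μ]
      fun ω => (X 0 ω - (μ[fun ω' => X (T ω') ω' | ℱ 0]) ω) / δ := by
  classical
  set V : Ω → ℝ := fun ω => X (T ω) ω with hVdef
  set f : ℕ → Ω → ℝ :=
    fun n ω => δ * ((min (T ω) n : ℕ) : ℝ) + Set.indicator {ω' | T ω' ≤ n} V ω with hfdef
  set F : Ω → ℝ := fun ω => δ * (T ω : ℝ) + V ω with hFdef
  have hgt : ∀ t, MeasurableSet {ω' | t < T ω'} := fun t => ℱ.le t _ (by simpa using hT.measurableSet_gt t)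
  have hle : ∀ t, MeasurableSet {ω' | T ω' ≤ t} := fun t => ℱ.le t _ (by simpa using hT.measurableSet_le t)
  have heq : ∀ t, MeasurableSet {ω' | T ω' = t} := fun t => ℱ.le t _ (by simpa using hT.measurableSet_eq t)
  have hTm : Measurable T := measurable_to_countable' fun t => by
    have h : T ⁻¹' {t} = {ω' | T ω' = t} := by ext ω; simp
    rw [h]; exact heq t
  have hTcm : Measurable fun ω => (T ω : ℝ) :=
    (measurable_from_top (f := fun j : ℕ => (j : ℝ))).comp hTm
  have hVm : Measurable V :=
    (measurable_stoppedValue (StronglyAdapted.isStronglyProgressive_of_discrete fun i => (hadapt i).stronglyMeasurable) hT).mono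
      hT.measurableSpace_le le_rfl
  have hV0 : ∀ ω, 0 ≤ V ω := fun ω => hnonneg _ ω
  have hFm : Measurable F := (measurable_const.mul hTcm).add hVm
  have hmin_int : ∀ k : ℕ, Integrable (fun ω => ((min (T ω) k : ℕ) : ℝ)) μ := by
    intro k
    have hms : Measurable fun ω => ((min (T ω) k : ℕ) : ℝ) :=
      (measurable_from_top (f := fun j : ℕ => ((min j k : ℕ) : ℝ))).comp hTm
    refine (integrable_const (k : ℝ)).mono' hms.aestronglyMeasurable (ae_of_all _ fun ω => ?_)
    rw [Real.norm_eq_abs, abs_of_nonneg (by positivity)]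
    exact_mod_cast min_le_right (T ω) k
  have hindV_int : ∀ n : ℕ, Integrable (Set.indicator {ω' | T ω' ≤ n} V) μ := fun n => by
    rw [hVdef, aux_ind_eq]
    exact integrable_finset_sum _ fun t _ => (hint t).indicator (heq t)
  have hfint : ∀ n, Integrable (f n) μ := fun n =>
    ((hmin_int n).const_mul δ).add (hindV_int n)
  have hmono : ∀ ω, Monotone fun n => f n ω := by
    intro ω a b hab
    simp only [hfdef]
    have h1 : ((min (T ω) a : ℕ) : ℝ) ≤ ((min (T ω) b : ℕ) : ℝ) := by
      exact_mod_cast min_le_min le_rfl hab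
    have h2 : Set.indicator {ω' | T ω' ≤ a} V ω ≤ Set.indicator {ω' | T ω' ≤ b} V ω := by
      by_cases h : T ω ≤ a
      · rw [Set.indicator_of_mem (show ω ∈ {ω' | T ω' ≤ a} from h),
          Set.indicator_of_mem (show ω ∈ {ω' | T ω' ≤ b} from le_trans h hab)]
      · rw [Set.indicator_of_notMem (show ω ∉ {ω' | T ω' ≤ a} from h)]
        exact Set.indicator_nonneg (fun ω' _ => hV0 ω') ω
    have := mul_le_mul_of_nonneg_left h1 hδ.le
    linarith
  have htend : ∀ ω, Tendsto (fun n => f n ω) atTop (𝓝 (F ω)) := fun ω =>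
    tendsto_atTop_of_eventually_const (i₀ := T ω) fun n hn => by
      simp only [hfdef, hFdef]
      rw [min_eq_left hn, Set.indicator_of_mem (show ω ∈ {ω' | T ω' ≤ n} from hn)]
  have hf0 : ∀ n ω, 0 ≤ f n ω := fun n ω =>
    add_nonneg (mul_nonneg hδ.le (by positivity)) (Set.indicator_nonneg (fun ω' _ => hV0 ω') ω)
  have hfs : ∀ s : Set Ω, MeasurableSet[ℱ 0] s → ∀ n,
      ∫ ω in s, f n ω ∂μ ≤ ∫ ω in s, X 0 ω ∂μ := by
    intro s hs n
    have hclaim := drift_claim μ ℱ X T hT hint hnonneg δ hdrift s hs n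
    rw [← hVdef] at hclaim
    have hsm : MeasurableSet s := ℱ.le 0 _ hs
    have h1 : ∫ ω in s, f n ω ∂μ
        = δ * ∫ ω in s, ((min (T ω) n : ℕ) : ℝ) ∂μ
          + ∫ ω in {ω' | T ω' ≤ n} ∩ s, V ω ∂μ := by
      simp only [hfdef]
      rw [integral_add (((hmin_int n).const_mul δ).restrict) ((hindV_int n).restrict),
        integral_const_mul, integral_indicator (hle n), Measure.restrict_restrict (hle n)]
    have h2 : 0 ≤ ∫ ω in {ω' | n < T ω'} ∩ s, X n ω ∂μ :=
      setIntegral_nonneg ((hgt n).inter hsm) fun ω _ => hnonneg n ω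
    rw [h1]
    linarith
  have hC : ∀ n, ∫ ω, f n ω ∂μ ≤ ∫ ω, X 0 ω ∂μ := fun n => by
    have h := hfs Set.univ MeasurableSet.univ n
    simpa using h
  have hFint : Integrable F μ :=
    aux_int_of_mono hFm.aestronglyMeasurable hfint hf0 hmono htend hC
  have hTint : Integrable (fun ω => (T ω : ℝ)) μ := by
    refine (hFint.div_const δ).mono' hTcm.aestronglyMeasurable (ae_of_all _ fun ω => ?_)
    rw [Real.norm_eq_abs, abs_of_nonneg (by positivity), le_div_iff₀ hδ]
    have := hV0 ω
    simp only [hFdef]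
    nlinarith
  have hVint : Integrable V μ := by
    refine hFint.mono' hVm.aestronglyMeasurable (ae_of_all _ fun ω => ?_)
    rw [Real.norm_eq_abs, abs_of_nonneg (hV0 ω)]
    simp only [hFdef]
    nlinarith [(Nat.cast_nonneg (T ω) : (0:ℝ) ≤ (T ω : ℝ)), hδ.le]
  have hm : ℱ 0 ≤ m0 := ℱ.le 0
  have hsF : ∀ s : Set Ω, MeasurableSet[ℱ 0] s →
      ∫ ω in s, F ω ∂μ ≤ ∫ ω in s, X 0 ω ∂μ := by
    intro s hs
    have hlim : Tendsto (fun n => ∫ ω in s, f n ω ∂μ) atTop (𝓝 (∫ ω in s, F ω ∂μ)) :=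
      integral_tendsto_of_tendsto_of_monotone (fun n => (hfint n).restrict) hFint.restrict
        (ae_of_all _ hmono) (ae_of_all _ htend)
    exact le_of_tendsto hlim (Eventually.of_forall (hfs s hs))
  have hcond : μ[F | ℱ 0] ≤ᵐ[μ] X 0 := by
    refine ae_le_of_ae_le_trim (hm := hm) ?_
    refine ae_le_of_forall_setIntegral_le
      (integrable_condExp.trim hm stronglyMeasurable_condExp)
      ((hint 0).trim hm (hadapt 0).stronglyMeasurable) fun s hs _ => ?_
    rw [← setIntegral_trim hm stronglyMeasurable_condExp hs,
      ← setIntegral_trim hm (hadapt 0).stronglyMeasurable hs, setIntegral_condExp hm hFint hs]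
    exact hsF s hs
  have hadd : μ[F | ℱ 0] =ᵐ[μ] μ[(fun ω => δ * (T ω : ℝ)) | ℱ 0] + μ[V | ℱ 0] := by
    have h : F = (fun ω => δ * (T ω : ℝ)) + V := rfl
    rw [h]
    exact condExp_add (hTint.const_mul δ) hVint _
  have hsmul : μ[(fun ω => δ * (T ω : ℝ)) | ℱ 0]
      =ᵐ[μ] fun ω => δ * (μ[fun ω' => (T ω' : ℝ) | ℱ 0]) ω := by
    have h := condExp_smul (μ := μ) (m := ℱ 0) (δ : ℝ) (fun ω => (T ω : ℝ))
    filter_upwards [h] with ω hω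
    exact hω
  filter_upwards [hcond, hadd, hsmul] with ω h1 h2 h3
  rw [le_div_iff₀ hδ]
  rw [h2] at h1
  simp only [Pi.add_apply] at h1
  rw [h3] at h1
  linarith
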